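/- arXiv:1512.01448 — 2 statements merged into one kernel-verified Lean document; each statement's English description precedes it below -/
import Mathlib

section
/- Let D be a digraph on vertex set V = {1,…,n}, let q ≥ 2, let f ∈ F[D,q] and let σ be a complete schedule. Then |Per(f^σ)| ≤ q^{n − T(D)}. -/
open Function

/-- A `p`-walk in the digraph `D` on vertex set `Fin n`. -/
def IsPWalk {n : ℕ} (D : Fin n → Fin n → Prop) (p : ℕ) (w : Fin (p + 1) → Fin n) : Prop :=
  ∀ s : Fin p, D (w s.castSucc) (w s.succ)

/-- `alphaWalks D p` is the maximum number of pairwise independent `p`-walks in `D`. -/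
noncomputable def alphaWalks {n : ℕ} (D : Fin n → Fin n → Prop) (p : ℕ) : ℕ :=
  sSup {k : ℕ | ∃ W : Fin k → Fin (p + 1) → Fin n,
    (∀ i, IsPWalk D p (W i)) ∧ ∀ i j : Fin k, i ≠ j → ∀ s, W i s ≠ W j s}

/-- The interaction graph of an FDS: `(u,v)` is an arc iff `f_v` depends essentially on `x_u`. -/
def IG {n q : ℕ} (f : (Fin n → Fin q) → Fin n → Fin q) (u v : Fin n) : Prop :=
  ∃ x y : Fin n → Fin q, (∀ w : Fin n, w ≠ u → x w = y w) ∧ f x v ≠ f y v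

/-- Membership in `F[D,q]`: the interaction graph of `f` equals `D`. -/
def ExactIG {n q : ℕ} (D : Fin n → Fin n → Prop) (f : (Fin n → Fin q) → Fin n → Fin q) : Prop :=
  ∀ u v, IG f u v ↔ D u v

/-- Membership in `F(D,q)`: the interaction graph of `f` is contained in `D`. -/
def SubIG {n q : ℕ} (D : Fin n → Fin n → Prop) (f : (Fin n → Fin q) → Fin n → Fin q) : Prop :=
  ∀ u v, IG f u v → D u v

/-- A cycle of `D`, given by its list of (distinct) vertices, with arcs between consecutive
vertices, cyclically. A loop is a cycle with one vertex. -/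
def IsCycleList {n : ℕ} (D : Fin n → Fin n → Prop) (c : List (Fin n)) : Prop :=
  c ≠ [] ∧ c.Nodup ∧
    ∀ i : Fin c.length, D (c.get i) (c.get ⟨((i : ℕ) + 1) % c.length, Nat.mod_lt _ i.pos⟩)

/-- A path of `D`, given by its list of (distinct) vertices. -/
def IsPathList {n : ℕ} (D : Fin n → Fin n → Prop) (P : List (Fin n)) : Prop :=
  P.Nodup ∧ P.Chain' D

/-- `f^{(S)}`: update the coordinates in `S` only. -/
def applyBlock {n q : ℕ} (f : (Fin n → Fin q) → Fin n → Fin q) (S : Finset (Fin n))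
    (x : Fin n → Fin q) : Fin n → Fin q :=
  fun v => if v ∈ S then f x v else x v

/-- `f^σ = f^{(σ_t)} ∘ ⋯ ∘ f^{(σ_1)}`. -/
def applySchedule {n q : ℕ} (f : (Fin n → Fin q) → Fin n → Fin q)
    (σ : List (Finset (Fin n))) : (Fin n → Fin q) → Fin n → Fin q :=
  σ.foldl (fun g S => applyBlock f S ∘ g) id

/-- A block-sequential schedule: every vertex is updated exactly once. -/
def BlockSequential {n : ℕ} (σ : List (Finset (Fin n))) : Prop :=
  σ.Pairwise Disjoint ∧ ∀ v : Fin n, ∃ S ∈ σ, v ∈ S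

/-- A complete schedule: every vertex is updated at least once. -/
def CompleteSchedule {n : ℕ} (σ : List (Finset (Fin n))) : Prop :=
  ∀ v : Fin n, ∃ S ∈ σ, v ∈ S

/-- `T(D)`: the number of trivial strong components of `D`, i.e. the number of
vertices not lying on any cycle of `D`. -/
noncomputable def numTrivial {n : ℕ} (D : Fin n → Fin n → Prop) : ℕ :=
  Set.ncard {v : Fin n | ¬ ∃ c : List (Fin n), IsCycleList D c ∧ v ∈ c}

/-- All vertices of `D` can be covered by pairwise vertex-disjoint cycles. -/
def CoveredByDisjointCycles {n : ℕ} (D : Fin n → Fin n → Prop) : Prop :=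
  ∃ Cs : List (List (Fin n)), (∀ c ∈ Cs, IsCycleList D c) ∧
    Cs.Pairwise (fun a b => ∀ v ∈ a, v ∉ b) ∧ ∀ v : Fin n, ∃ c ∈ Cs, v ∈ c

open Relation


section P1
variable {n q : ℕ}

/-- state-based run of a schedule -/
def runSched (f : (Fin n → Fin q) → Fin n → Fin q) (σ : List (Finset (Fin n)))
    (x : Fin n → Fin q) : Fin n → Fin q :=
  σ.foldl (fun s S => applyBlock f S s) x

lemma runSched_cons (f : (Fin n → Fin q) → Fin n → Fin q) (S : Finset (Fin n))
    (σ : List (Finset (Fin n))) (x : Fin n → Fin q) :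
    runSched f (S :: σ) x = runSched f σ (applyBlock f S x) := rfl

lemma applySchedule_eq_runSched (f : (Fin n → Fin q) → Fin n → Fin q)
    (σ : List (Finset (Fin n))) (x : Fin n → Fin q) :
    applySchedule f σ x = runSched f σ x := by
  have h : ∀ (σ : List (Finset (Fin n))) (g : (Fin n → Fin q) → Fin n → Fin q)
      (x : Fin n → Fin q),
      List.foldl (fun g S => applyBlock f S ∘ g) g σ x = runSched f σ (g x) := by
    intro σ
    induction σ with
    | nil => intro g x; rfl
    | cons S σ ih =>
      intro g x
      rw [List.foldl_cons, runSched_cons]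
      exact ih (applyBlock f S ∘ g) x
  exact h σ id x

lemma not_IG_apply {f : (Fin n → Fin q) → Fin n → Fin q} {u b : Fin n}
    (h : ¬ IG f u b) {x y : Fin n → Fin q} (hxy : ∀ w, w ≠ u → x w = y w) :
    f x b = f y b := by
  by_contra hne
  exact h ⟨x, y, hxy, hne⟩

lemma indep_of_forall_not_IG {f : (Fin n → Fin q) → Fin n → Fin q} {b : Fin n}
    {A : Set (Fin n)} (h : ∀ u, u ∉ A → ¬ IG f u b) :
    ∀ x y : Fin n → Fin q, (∀ w ∈ A, x w = y w) → f x b = f y b := by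
  have key : ∀ (k : ℕ) (x y : Fin n → Fin q),
      (Finset.univ.filter (fun w => x w ≠ y w)).card ≤ k →
      (∀ w ∈ A, x w = y w) → f x b = f y b := by
    intro k
    induction k with
    | zero =>
      intro x y hc _
      have hxy : x = y := by
        funext w
        by_contra hw
        have hmem : w ∈ Finset.univ.filter (fun w => x w ≠ y w) := by simp [hw]
        have := Finset.card_pos.mpr ⟨w, hmem⟩
        omega
      rw [hxy]
    | succ k ih =>
      intro x y hc hA
      by_cases hxy : ∀ w, x w = y w
      · rw [funext hxy]
      · push_neg at hxy
        obtain ⟨u, hu⟩ := hxy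
        have huA : u ∉ A := fun h' => hu (hA u h')
        have h1 : f x b = f (Function.update x u (y u)) b := by
          refine not_IG_apply (h u huA) (fun w hw => ?_)
          rw [Function.update_of_ne hw]
        have h2 : f (Function.update x u (y u)) b = f y b := by
          refine ih _ _ ?_ ?_
          · have hsub : (Finset.univ.filter
                (fun w => Function.update x u (y u) w ≠ y w)) ⊆
                (Finset.univ.filter (fun w => x w ≠ y w)).erase u := by
              intro w hw
              simp only [Finset.mem_filter, Finset.mem_univ, true_and] at hw
              have hwu : w ≠ u := by
                intro hwu; subst hwu; simp at hw
              rw [Function.update_of_ne hwu] at hw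
              simp [Finset.mem_erase, hwu, hw]
            have hmem : u ∈ Finset.univ.filter (fun w => x w ≠ y w) := by simp [hu]
            have := Finset.card_le_card hsub
            rw [Finset.card_erase_of_mem hmem] at this
            omega
          · intro w hw
            by_cases hwu : w = u
            · subst hwu; simp
            · rw [Function.update_of_ne hwu]; exact hA w hw
        rw [h1, h2]
  exact fun x y => key _ x y le_rfl

lemma ig_self_of_frozen (hq : 2 ≤ q) {f : (Fin n → Fin q) → Fin n → Fin q} {w : Fin n}
    (hw : ∀ x : Fin n → Fin q, f x w = x w) : IG f w w := by
  haveI : Nontrivial (Fin q) := Fin.nontrivial_iff_two_le.mpr hq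
  set a : Fin q := ⟨0, by omega⟩
  obtain ⟨c, hc⟩ := exists_ne a
  refine ⟨Function.update (fun _ => a) w c, (fun _ => a),
    fun u hu => Function.update_of_ne hu _ _, ?_⟩
  rw [hw, hw]
  simpa using hc

/-- IG is determined pointwise by the coordinate function. -/
lemma ig_congr {f g : (Fin n → Fin q) → Fin n → Fin q} {b : Fin n}
    (h : ∀ x, f x b = g x b) (a : Fin n) : IG f a b ↔ IG g a b := by
  constructor <;> rintro ⟨x, y, hxy, hne⟩ <;> exact ⟨x, y, hxy, by simp only [h] at hne ⊢; exact hne⟩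

end P1

section P2
variable {n q : ℕ}

/-- If no coordinate function depends on coordinate `v`, then `f` is invariant under
changes of coordinate `v`. -/
lemma f_ignores {f : (Fin n → Fin q) → Fin n → Fin q} {v : Fin n}
    (hv : ∀ b, ¬ IG f v b) {x y : Fin n → Fin q}
    (hxy : ∀ w, w ≠ v → x w = y w) : f x = f y :=
  funext fun b => not_IG_apply (hv b) hxy

/-- running any schedule preserves agreement off `v`. -/
lemma runSched_agree_off {f : (Fin n → Fin q) → Fin n → Fin q} {v : Fin n}
    (hv : ∀ b, ¬ IG f v b) :
    ∀ (σ : List (Finset (Fin n))) (x y : Fin n → Fin q),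
      (∀ w, w ≠ v → x w = y w) → ∀ w, w ≠ v → runSched f σ x w = runSched f σ y w := by
  intro σ
  induction σ with
  | nil => intro x y h; exact h
  | cons S σ ih =>
    intro x y h
    rw [runSched_cons, runSched_cons]
    refine ih _ _ (fun w hw => ?_)
    unfold applyBlock
    by_cases hS : w ∈ S
    · simp only [hS, if_true, f_ignores hv h]
    · simp only [hS, if_false]; exact h w hw

/-- if `v ∈ S`, a block update collapses agreement off `v` to full agreement. -/
lemma applyBlock_collapse {f : (Fin n → Fin q) → Fin n → Fin q} {v : Fin n}
    (hv : ∀ b, ¬ IG f v b) {S : Finset (Fin n)} (hS : v ∈ S)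
    {x y : Fin n → Fin q} (h : ∀ w, w ≠ v → x w = y w) :
    applyBlock f S x = applyBlock f S y := by
  funext w
  unfold applyBlock
  by_cases hw : w ∈ S
  · simp only [hw, if_true, f_ignores hv h]
  · simp only [hw, if_false]
    exact h w (fun hwv => hw (hwv ▸ hS))

/-- complete schedules collapse agreement off `v` to equality. -/
lemma runSched_collapse {f : (Fin n → Fin q) → Fin n → Fin q} {v : Fin n}
    (hv : ∀ b, ¬ IG f v b) {σ : List (Finset (Fin n))} (hσ : CompleteSchedule σ)
    {x y : Fin n → Fin q} (h : ∀ w, w ≠ v → x w = y w) :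
    runSched f σ x = runSched f σ y := by
  obtain ⟨S, hSσ, hvS⟩ := hσ v
  obtain ⟨l₁, l₂, rfl⟩ := List.append_of_mem hSσ
  unfold runSched
  rw [List.foldl_append, List.foldl_append, List.foldl_cons, List.foldl_cons]
  congr 1
  exact applyBlock_collapse hv hvS (runSched_agree_off hv l₁ x y h)

/-- freeze dynamics: running the schedule for `f` frozen at `v`. -/
lemma runSched_freeze {f : (Fin n → Fin q) → Fin n → Fin q} {v : Fin n}
    (hv : ∀ b, ¬ IG f v b) :
    ∀ (σ : List (Finset (Fin n))) (x : Fin n → Fin q),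
      runSched (fun y w => if w = v then y v else f y w) σ x
        = Function.update (runSched f σ x) v (x v) := by
  intro σ
  induction σ with
  | nil => intro x; exact (Function.update_eq_self v x).symm
  | cons S σ ih =>
    intro x
    rw [runSched_cons, runSched_cons, ih]
    have hblock : applyBlock (fun y w => if w = v then y v else f y w) S x
        = Function.update (applyBlock f S x) v (x v) := by
      funext w
      by_cases hwv : w = v
      · subst hwv
        simp only [Function.update_self, applyBlock]
        by_cases hS : w ∈ S <;> simp [hS]
      · rw [Function.update_of_ne hwv]
        unfold applyBlock
        by_cases hS : w ∈ S <;> simp [hS, hwv]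
    rw [hblock]
    have hoff : ∀ w, w ≠ v →
        runSched f σ (Function.update (applyBlock f S x) v (x v)) w
          = runSched f σ (applyBlock f S x) w := by
      refine runSched_agree_off hv σ _ _ (fun w hw => ?_)
      rw [Function.update_of_ne hw]
    funext w
    by_cases hwv : w = v
    · subst hwv; simp
    · rw [Function.update_of_ne hwv, Function.update_of_ne hwv]
      exact hoff w hwv

/-- subsystem dynamics on an in-closed set `A`. -/
lemma runSched_subsystem {f : (Fin n → Fin q) → Fin n → Fin q} {A : Set (Fin n)}
    (hA : ∀ a ∈ A, ∀ u, u ∉ A → ¬ IG f u a) [DecidablePred (· ∈ A)] :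
    ∀ (σ : List (Finset (Fin n))) (s t : Fin n → Fin q), (∀ a ∈ A, s a = t a) →
      (∀ a ∈ A, runSched f σ s a
          = runSched (fun y w => if w ∈ A then f y w else y w) σ t a) ∧
      (∀ w, w ∉ A → runSched (fun y w => if w ∈ A then f y w else y w) σ t w = t w) := by
  intro σ
  induction σ with
  | nil => intro s t h; exact ⟨h, fun _ _ => rfl⟩
  | cons S σ ih =>
    intro s t h
    rw [runSched_cons, runSched_cons]
    have hstep : ∀ a ∈ A, applyBlock f S s a
        = applyBlock (fun y w => if w ∈ A then f y w else y w) S t a := by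
      intro a ha
      unfold applyBlock
      by_cases hS : a ∈ S
      · simp only [hS, if_true, ha, if_pos]
        exact indep_of_forall_not_IG (fun u hu => hA a ha u hu) s t h
      · simp only [hS, if_false]; exact h a ha
    have hout : ∀ w, w ∉ A →
        applyBlock (fun y w => if w ∈ A then f y w else y w) S t w = t w := by
      intro w hw
      unfold applyBlock
      by_cases hS : w ∈ S <;> simp [hS, hw]
    obtain ⟨ih1, ih2⟩ := ih (applyBlock f S s)
      (applyBlock (fun y w => if w ∈ A then f y w else y w) S t) hstep
    exact ⟨ih1, fun w hw => (ih2 w hw).trans (hout w hw)⟩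

end P2

section P3
variable {n : ℕ}

lemma exists_walk {D : Fin n → Fin n → Prop} {a b : Fin n}
    (h : Relation.TransGen D a b) :
    ∃ k, 1 ≤ k ∧ ∃ w : ℕ → Fin n, w 0 = a ∧ w k = b ∧ ∀ i < k, D (w i) (w (i + 1)) := by
  induction h with
  | @single c hac =>
    exact ⟨1, le_rfl, fun i => if i = 0 then a else c, by simp, by simp,
      fun i hi => by interval_cases i; simpa using hac⟩
  | @tail c d hac hcd ih =>
    obtain ⟨k, hk, w, h0, hkc, harc⟩ := ih
    refine ⟨k + 1, by omega, fun i => if i ≤ k then w i else d, by simp [h0], by simp, ?_⟩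
    intro i hi
    by_cases hik : i + 1 ≤ k
    · simp only [if_pos (by omega : i ≤ k), if_pos hik]
      exact harc i (by omega)
    · have : i = k := by omega
      subst this
      simp only [if_pos le_rfl, if_neg hik, hkc]
      exact hcd

lemma cycle_of_walk {D : Fin n → Fin n → Prop} :
    ∀ k, 1 ≤ k → ∀ w : ℕ → Fin n, (∀ i < k, D (w i) (w (i + 1))) → w k = w 0 →
      ∃ c, IsCycleList D c ∧ w 0 ∈ c := by
  intro k
  induction k using Nat.strong_induction_on with
  | _ k ih =>
    intro hk w harc hclosed
    by_cases hinj : ∀ i < k, ∀ j < k, w i = w j → i = j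
    · -- build the cycle directly
      refine ⟨List.ofFn (fun i : Fin k => w i), ⟨?_, ?_, ?_⟩, ?_⟩
      · intro hnil
        have : k = 0 := by simpa using congrArg List.length hnil
        omega
      · rw [List.nodup_ofFn]
        intro i j hij
        exact Fin.ext (hinj i i.isLt j j.isLt hij)
      · intro i
        have hlen : (List.ofFn (fun i : Fin k => w i)).length = k := by simp
        have hi : (i : ℕ) < k := by
          have := i.isLt
          omega
        rw [List.get_ofFn, List.get_ofFn]
        simp only [Fin.coe_cast]
        by_cases hik : (i : ℕ) + 1 < k
        · have hmod : ((i : ℕ) + 1) % (List.ofFn (fun i : Fin k => w i)).length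
              = (i : ℕ) + 1 := Nat.mod_eq_of_lt (by omega)
          rw [hmod]
          exact harc i hi
        · have hik' : (i : ℕ) + 1 = k := by omega
          have hmod : ((i : ℕ) + 1) % (List.ofFn (fun i : Fin k => w i)).length = 0 := by
            have heq : (i : ℕ) + 1 = (List.ofFn (fun i : Fin k => w i)).length := by omega
            rw [heq, Nat.mod_self]
          rw [hmod]
          have harc' := harc i hi
          rw [hik', hclosed] at harc'
          exact harc'
      · have h0 : (0 : ℕ) < k := by omega
        rw [List.mem_ofFn]
        exact ⟨⟨0, h0⟩, rfl⟩
    · -- splice out a repeated segment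
      push_neg at hinj
      obtain ⟨i, hi, j, hj, hwij, hij⟩ := hinj
      -- wlog i < j
      obtain ⟨i, j, hi, hj, hlt, hwij⟩ : ∃ i j, i < k ∧ j < k ∧ i < j ∧ w i = w j := by
        rcases Nat.lt_or_ge i j with h | h
        · exact ⟨i, j, hi, hj, h, hwij⟩
        · exact ⟨j, i, hj, hi, by omega, hwij.symm⟩
      set d := j - i with hd
      have hd1 : 1 ≤ d := by omega
      set k' := k - d with hk'
      have hk'1 : 1 ≤ k' := by omega
      have hk'lt : k' < k := by omega
      set w' := fun m => if m ≤ i then w m else w (m + d) with hw'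
      have hw'0 : w' 0 = w 0 := by simp [hw']
      have hw'k : w' k' = w 0 := by
        have hik' : ¬ k' ≤ i := by omega
        simp only [hw', if_neg hik']
        have : k' + d = k := by omega
        rw [this, hclosed]
      have harc' : ∀ m < k', D (w' m) (w' (m + 1)) := by
        intro m hm
        by_cases hm1 : m + 1 ≤ i
        · simp only [hw', if_pos (by omega : m ≤ i), if_pos hm1]
          exact harc m (by omega)
        · by_cases hmi : m ≤ i
          · have : m = i := by omega
            subst this
            simp only [hw', if_pos le_rfl, if_neg hm1]
            have : m + 1 + d = j + 1 := by omega
            rw [this, hwij]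
            exact harc j hj
          · simp only [hw', if_neg hmi, if_neg hm1]
            have : m + 1 + d = m + d + 1 := by omega
            rw [this]
            exact harc (m + d) (by omega)
      obtain ⟨c, hc, hmem⟩ := ih k' hk'lt hk'1 w' harc' (hw'k.trans hw'0.symm)
      rw [hw'0] at hmem
      exact ⟨c, hc, hmem⟩

lemma cycle_of_transGen {D : Fin n → Fin n → Prop} {v : Fin n}
    (h : Relation.TransGen D v v) : ∃ c, IsCycleList D c ∧ v ∈ c := by
  obtain ⟨k, hk, w, h0, hkv, harc⟩ := exists_walk h
  have := cycle_of_walk k hk w harc (by rw [hkv, h0])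
  rwa [h0] at this

end P3

section P4
variable {n q : ℕ}

lemma card_slice_bound {S : Set (Fin n → Fin q)} {F : Finset (Fin n)} {z0 : Fin q}
    (hS : ∀ x ∈ S, ∀ w ∈ F, x w = z0) :
    Nat.card S * q ^ F.card ≤ q ^ n := by
  classical
  have h1 : Nat.card (↥S × (↥F → Fin q)) ≤ Nat.card (Fin n → Fin q) := by
    apply Nat.card_le_card_of_injective
      (fun p : ↥S × (↥F → Fin q) =>
        (fun w => if h : w ∈ F then p.2 ⟨w, h⟩ else (p.1 : Fin n → Fin q) w : Fin n → Fin q))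
    rintro ⟨⟨x, hx⟩, t⟩ ⟨⟨y, hy⟩, s⟩ hab
    simp only at hab
    have hxy : x = y := by
      funext w
      by_cases hw : w ∈ F
      · rw [hS x hx w hw, hS y hy w hw]
      · have := congrFun hab w
        simpa [dif_neg hw] using this
    have hts : t = s := by
      funext w
      have := congrFun hab w.1
      simpa [dif_pos w.2] using this
    subst hxy; subst hts; rfl
  rw [Nat.card_prod, Nat.card_fun, Nat.card_fun, Nat.card_eq_finsetCard] at h1
  simpa [Nat.card_eq_fintype_card] using h1

/-- trivial vertices of the interaction graph of `f` -/
def trivSet {n q : ℕ} (f : (Fin n → Fin q) → Fin n → Fin q) : Set (Fin n) :=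
  {v | ¬ Relation.TransGen (IG f) v v}

theorem aux_bound (hq : 2 ≤ q) (z0 : Fin q) :
    ∀ (m : ℕ) (F : Finset (Fin n)) (f : (Fin n → Fin q) → Fin n → Fin q)
      (σ : List (Finset (Fin n))),
      Fᶜ.card ≤ m →
      (∀ w ∈ F, ∀ x, f x w = x w) →
      CompleteSchedule σ →
      Nat.card {x : Fin n → Fin q |
          x ∈ Function.periodicPts (applySchedule f σ) ∧ ∀ w ∈ F, x w = z0}
        * q ^ (F.card + (trivSet f).ncard) ≤ q ^ n := by
  intro m
  induction m with
  | zero =>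
    intro F f σ hm hfreeze hσ
    have hUempty : trivSet f = ∅ := by
      rw [Set.eq_empty_iff_forall_notMem]
      intro v hv
      have hvF : v ∈ F := by
        by_contra hvF
        have hvc : v ∈ Fᶜ := Finset.mem_compl.mpr hvF
        have := Finset.card_pos.mpr ⟨v, hvc⟩
        omega
      exact hv (Relation.TransGen.single (ig_self_of_frozen hq (fun x => hfreeze v hvF x)))
    rw [hUempty, Set.ncard_empty, Nat.add_zero]
    exact card_slice_bound (fun x hx => hx.2)
  | succ m ih =>
    intro F f σ hm hfreeze hσ
    classical
    by_cases hU : trivSet f = ∅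
    · rw [hU, Set.ncard_empty, Nat.add_zero]
      exact card_slice_bound (fun x hx => hx.2)
    have hUne : (trivSet f).Nonempty := Set.nonempty_iff_ne_empty.mpr hU
    have hUfin : (trivSet f).Finite := Set.toFinite _
    -- choose a trivial vertex from which no trivial vertex is reachable
    obtain ⟨v, hvU, hvmin⟩ := Finset.exists_min_image hUfin.toFinset
      (fun a => {b | Relation.ReflTransGen (IG f) a b}.ncard)
      (by rwa [Set.Finite.toFinset_nonempty])
    rw [Set.Finite.mem_toFinset] at hvU
    have hvmax : ∀ w ∈ trivSet f, ¬ Relation.TransGen (IG f) v w := by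
      intro w hw htg
      have hsub : {b | Relation.ReflTransGen (IG f) w b}
          ⊂ {b | Relation.ReflTransGen (IG f) v b} := by
        constructor
        · intro b hb
          exact htg.to_reflTransGen.trans hb
        · intro hsup
          have hvw : Relation.ReflTransGen (IG f) w v :=
            hsup (Relation.ReflTransGen.refl)
          exact hvU (htg.trans_left hvw)
      have hlt := Set.ncard_lt_ncard hsub (Set.toFinite _)
      have := hvmin w (Set.Finite.mem_toFinset hUfin |>.mpr hw)
      omega
    set A : Set (Fin n) := {a | ∃ u ∈ trivSet f, Relation.ReflTransGen (IG f) a u}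
      with hAdef
    have hAclosed : ∀ a ∈ A, ∀ u, IG f u a → u ∈ A := by
      rintro a ⟨u', hu', hru⟩ u hig
      exact ⟨u', hu', Relation.ReflTransGen.head hig hru⟩
    have hUsubA : trivSet f ⊆ A := fun u hu => ⟨u, hu, Relation.ReflTransGen.refl⟩
    have hvA : v ∈ A := hUsubA hvU
    by_cases hcase : ∀ w, w ∉ A → w ∈ F
    · -- CASE 1: v has no out-arcs; freeze it
      have hvout : ∀ b, ¬ IG f v b := by
        intro b hb
        by_cases hbA : b ∈ A
        · obtain ⟨u, hu, hru⟩ := hbA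
          exact hvmax u hu (Relation.TransGen.head' hb hru)
        · have hbF : b ∈ F := hcase b hbA
          have hvb : b ≠ v := by
            intro h; subst h; exact hbA hvA
          obtain ⟨x, y, hxy, hne⟩ := hb
          exact hne (by rw [hfreeze b hbF x, hfreeze b hbF y, hxy b hvb])
      have hvF : v ∉ F := fun hvF =>
        hvU (Relation.TransGen.single (ig_self_of_frozen hq (fun x => hfreeze v hvF x)))
      set f' : (Fin n → Fin q) → Fin n → Fin q :=
        fun y w => if w = v then y v else f y w with hf'def
      have harcs' : ∀ a b, b ≠ v → (IG f' a b ↔ IG f a b) := by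
        intro a b hbv
        exact ig_congr (fun x => by simp [hf'def, hbv]) a
      have hkey : ∀ a b, Relation.TransGen (IG f') a b → b ≠ v →
          Relation.TransGen (IG f) a b ∧ a ≠ v := by
        intro a b h
        induction h with
        | @single c hc =>
          intro hcv
          have hig : IG f a c := (harcs' a c hcv).mp hc
          refine ⟨Relation.TransGen.single hig, ?_⟩
          intro hav; subst hav; exact hvout c hig
        | @tail c d hac hcd ihk =>
          intro hdv
          have hcv : c ≠ v := by
            intro h; subst h
            exact hvout d ((harcs' _ d hdv).mp hcd)
          obtain ⟨h1, h2⟩ := ihk hcv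
          exact ⟨h1.tail ((harcs' c d hdv).mp hcd), h2⟩
      have hsub2 : trivSet f ⊆ insert v (trivSet f') := by
        intro w hw
        by_cases hwv : w = v
        · exact hwv ▸ Set.mem_insert _ _
        · refine Set.mem_insert_of_mem _ ?_
          intro htg'
          exact hw ((hkey w w htg' hwv).1)
      have hncard : (trivSet f).ncard ≤ (trivSet f').ncard + 1 :=
        le_trans (Set.ncard_le_ncard hsub2 (Set.toFinite _)) (Set.ncard_insert_le _ _)
      -- dynamics
      have hg' : ∀ x, applySchedule f' σ x
          = Function.update (applySchedule f σ x) v (x v) := by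
        intro x
        rw [applySchedule_eq_runSched, applySchedule_eq_runSched]
        exact runSched_freeze hvout σ x
      have hcol : ∀ x y : Fin n → Fin q, (∀ w, w ≠ v → x w = y w) →
          applySchedule f σ x = applySchedule f σ y := by
        intro x y h
        rw [applySchedule_eq_runSched, applySchedule_eq_runSched]
        exact runSched_collapse hvout hσ h
      have hiter : ∀ (x : Fin n → Fin q) (k : ℕ),
          (applySchedule f' σ)^[k] (Function.update x v z0)
            = Function.update ((applySchedule f σ)^[k] x) v z0 := by
        intro x k
        induction k with
        | zero => rfl
        | succ k ihk =>
          rw [Function.iterate_succ_apply', Function.iterate_succ_apply', ihk, hg']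
          rw [Function.update_self]
          have : applySchedule f σ (Function.update ((applySchedule f σ)^[k] x) v z0)
              = applySchedule f σ ((applySchedule f σ)^[k] x) := by
            apply hcol
            intro w hw; rw [Function.update_of_ne hw]
          rw [this]
      set Sf : Set (Fin n → Fin q) := {x | x ∈ Function.periodicPts (applySchedule f σ)
        ∧ ∀ w ∈ F, x w = z0} with hSf
      set Sf' : Set (Fin n → Fin q) := {x | x ∈ Function.periodicPts (applySchedule f' σ)
        ∧ ∀ w ∈ insert v F, x w = z0} with hSf'
      have hinjmem : ∀ x ∈ Sf, Function.update x v z0 ∈ Sf' := by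
        intro x hx
        obtain ⟨hper, hslice⟩ := hx
        obtain ⟨p, hp, hpx⟩ := Function.mem_periodicPts.mp hper
        constructor
        · rw [Function.mem_periodicPts]
          refine ⟨p, hp, ?_⟩
          show (applySchedule f' σ)^[p] _ = _
          rw [hiter x p, show (applySchedule f σ)^[p] x = x from hpx]
        · intro w hw
          rcases Finset.mem_insert.mp hw with h | h
          · subst h; rw [Function.update_self]
          · by_cases hwv : w = v
            · subst hwv; rw [Function.update_self]
            · rw [Function.update_of_ne hwv]; exact hslice w h
      have hmapinj : ∀ x ∈ Sf, ∀ y ∈ Sf,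
          Function.update x v z0 = Function.update y v z0 → x = y := by
        intro x hx y hy hxy
        obtain ⟨px, hpx, hpxx⟩ := Function.mem_periodicPts.mp hx.1
        obtain ⟨py, hpy, hpyy⟩ := Function.mem_periodicPts.mp hy.1
        have hoff : ∀ w, w ≠ v → x w = y w := by
          intro w hw
          have := congrFun hxy w
          rwa [Function.update_of_ne hw, Function.update_of_ne hw] at this
        have hgxy : applySchedule f σ x = applySchedule f σ y := hcol x y hoff
        have hx' : (applySchedule f σ)^[px * py] x = x := hpxx.mul_const py
        have hy' : (applySchedule f σ)^[px * py] y = y := hpyy.const_mul px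
        have hP : px * py = (px * py - 1) + 1 := by
          have := Nat.mul_pos hpx hpy; omega
        calc x = (applySchedule f σ)^[px * py] x := hx'.symm
          _ = (applySchedule f σ)^[px * py - 1] (applySchedule f σ x) := by
              conv_lhs => rw [hP, Function.iterate_succ_apply]
          _ = (applySchedule f σ)^[px * py - 1] (applySchedule f σ y) := by rw [hgxy]
          _ = (applySchedule f σ)^[px * py] y := by
              conv_rhs => rw [hP, Function.iterate_succ_apply]
          _ = y := hy'
      have hcard1 : Nat.card Sf ≤ Nat.card Sf' := by
        have hinj : Function.Injective
            (fun x : ↥Sf => (⟨Function.update x.1 v z0, hinjmem x.1 x.2⟩ : ↥Sf')) := by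
          rintro ⟨x, hx⟩ ⟨y, hy⟩ hab
          exact Subtype.ext (hmapinj x hx y hy (congrArg Subtype.val hab))
        exact Nat.card_le_card_of_injective _ hinj
      have hFc : (insert v F)ᶜ.card ≤ m := by
        rw [Finset.compl_insert, Finset.card_erase_of_mem (Finset.mem_compl.mpr hvF)]
        omega
      have hfreeze' : ∀ w ∈ insert v F, ∀ x : Fin n → Fin q, f' x w = x w := by
        intro w hw x
        rcases Finset.mem_insert.mp hw with h | h
        · subst h; simp [hf'def]
        · simp only [hf'def]
          by_cases hwv : w = v
          · subst hwv; simp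
          · rw [if_neg hwv]; exact hfreeze w h x
      have hexp1 : F.card + (trivSet f).ncard
          ≤ (insert v F).card + (trivSet f').ncard := by
        rw [Finset.card_insert_of_notMem hvF]
        omega
      have hq1 : 1 ≤ q := by omega
      calc Nat.card Sf * q ^ (F.card + (trivSet f).ncard)
          ≤ Nat.card Sf' * q ^ ((insert v F).card + (trivSet f').ncard) :=
            Nat.mul_le_mul hcard1 (Nat.pow_le_pow_right hq1 hexp1)
        _ ≤ q ^ n := ih (insert v F) f' σ hFc hfreeze' hσ
    · -- CASE 2: restrict to the subsystem on A
      push_neg at hcase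
      obtain ⟨w0, hw0A, hw0F⟩ := hcase
      set Afin : Finset (Fin n) := Finset.univ.filter (· ∈ A) with hAfin
      have hAfinmem : ∀ w, w ∈ Afin ↔ w ∈ A := by
        intro w; simp [hAfin]
      set F'' : Finset (Fin n) := F ∪ Afinᶜ with hF''
      set f'' : (Fin n → Fin q) → Fin n → Fin q :=
        fun y w => if w ∈ A then f y w else y w with hf''def
      have hAind : ∀ a ∈ A, ∀ u, u ∉ A → ¬ IG f u a :=
        fun a ha u hu hig => hu (hAclosed a ha u hig)
      have harcs'' : ∀ u b, b ∈ A → (IG f'' u b ↔ IG f u b) := by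
        intro u b hb
        exact ig_congr (fun x => by simp [hf''def, hb]) u
      have hkey2 : ∀ a b, Relation.TransGen (IG f'') a b → b ∈ A →
          a ∈ A ∧ Relation.TransGen (IG f) a b := by
        intro a b h
        induction h with
        | @single c hc =>
          intro hcA
          have hig : IG f a c := (harcs'' a c hcA).mp hc
          exact ⟨hAclosed c hcA a hig, Relation.TransGen.single hig⟩
        | @tail c d hac hcd ihk =>
          intro hdA
          have hig : IG f c d := (harcs'' c d hdA).mp hcd
          have hcA : c ∈ A := hAclosed d hdA c hig
          obtain ⟨h1, h2⟩ := ihk hcA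
          exact ⟨h1, h2.tail hig⟩
      have hUsub'' : trivSet f ⊆ trivSet f'' := by
        intro w hw htg
        exact hw ((hkey2 w w htg (hUsubA hw)).2)
      have hncard'' : (trivSet f).ncard ≤ (trivSet f'').ncard :=
        Set.ncard_le_ncard hUsub'' (Set.toFinite _)
      have hfreeze'' : ∀ w ∈ F'', ∀ x : Fin n → Fin q, f'' x w = x w := by
        intro w hw x
        by_cases hwA : w ∈ A
        · have hwF : w ∈ F := by
            rcases Finset.mem_union.mp hw with h | h
            · exact h
            · exact absurd ((hAfinmem w).mpr hwA) (Finset.mem_compl.mp h)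
          simp only [hf''def, if_pos hwA]
          exact hfreeze w hwF x
        · simp [hf''def, hwA]
      have hF''c : F''ᶜ.card ≤ m := by
        have hssub : F''ᶜ ⊂ Fᶜ := by
          constructor
          · intro w hw
            rw [Finset.mem_compl] at hw ⊢
            intro hwF
            exact hw (Finset.mem_union_left _ hwF)
          · intro hsup
            have hw0 : w0 ∈ Fᶜ := Finset.mem_compl.mpr hw0F
            have := hsup hw0
            rw [Finset.mem_compl] at this
            exact this (Finset.mem_union_right _
              (Finset.mem_compl.mpr (fun h => hw0A ((hAfinmem w0).mp h))))
        have := Finset.card_lt_card hssub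
        omega
      have hIH2 := ih F'' f'' σ hF''c hfreeze'' hσ
      -- the zeroing map
      set zA : (Fin n → Fin q) → (Fin n → Fin q) :=
        fun x w => if w ∈ A then x w else z0 with hzA
      have hstep : ∀ s t : Fin n → Fin q, (∀ a ∈ A, s a = t a) →
          (∀ a ∈ A, applySchedule f σ s a = applySchedule f'' σ t a) ∧
          (∀ w, w ∉ A → applySchedule f'' σ t w = t w) := by
        intro s t h
        have hr := runSched_subsystem hAind σ s t h
        constructor
        · intro a ha
          rw [applySchedule_eq_runSched, applySchedule_eq_runSched]
          exact hr.1 a ha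
        · intro w hw
          rw [applySchedule_eq_runSched]
          exact hr.2 w hw
      have hiter2 : ∀ (x : Fin n → Fin q) (k : ℕ),
          (∀ a ∈ A, (applySchedule f'' σ)^[k] (zA x) a = (applySchedule f σ)^[k] x a) ∧
          (∀ w, w ∉ A → (applySchedule f'' σ)^[k] (zA x) w = z0) := by
        intro x k
        induction k with
        | zero =>
          constructor
          · intro a ha; simp [hzA, if_pos ha]
          · intro w hw; simp [hzA, if_neg hw]
        | succ k ihk =>
          obtain ⟨ih1, ih2⟩ := ihk
          have hs := hstep ((applySchedule f σ)^[k] x) ((applySchedule f'' σ)^[k] (zA x))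
            (fun a ha => (ih1 a ha).symm)
          constructor
          · intro a ha
            rw [Function.iterate_succ_apply', Function.iterate_succ_apply']
            exact (hs.1 a ha).symm
          · intro w hw
            rw [Function.iterate_succ_apply', hs.2 w hw]
            exact ih2 w hw
      set Sf : Set (Fin n → Fin q) := {x | x ∈ Function.periodicPts (applySchedule f σ)
        ∧ ∀ w ∈ F, x w = z0} with hSf
      set Sf'' : Set (Fin n → Fin q) := {x | x ∈ Function.periodicPts (applySchedule f'' σ)
        ∧ ∀ w ∈ F'', x w = z0} with hSf''
      have hmem'' : ∀ x ∈ Sf, zA x ∈ Sf'' := by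
        intro x hx
        obtain ⟨hper, hslice⟩ := hx
        obtain ⟨p, hp, hpx⟩ := Function.mem_periodicPts.mp hper
        constructor
        · rw [Function.mem_periodicPts]
          refine ⟨p, hp, ?_⟩
          show (applySchedule f'' σ)^[p] (zA x) = zA x
          funext w
          by_cases hw : w ∈ A
          · rw [(hiter2 x p).1 w hw, show (applySchedule f σ)^[p] x = x from hpx]
            simp [hzA, if_pos hw]
          · rw [(hiter2 x p).2 w hw]
            simp [hzA, if_neg hw]
        · intro w hw
          by_cases hwA : w ∈ A
          · have hwF : w ∈ F := by
              rcases Finset.mem_union.mp hw with h | h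
              · exact h
              · exact absurd ((hAfinmem w).mpr hwA) (Finset.mem_compl.mp h)
            simp only [hzA, if_pos hwA]
            exact hslice w hwF
          · simp [hzA, hwA]
      have hcard2 : Nat.card Sf ≤ Nat.card Sf'' * q ^ (Afinᶜ \ F).card := by
        have hinj : Nat.card Sf
            ≤ Nat.card (↥Sf'' × (↥(Afinᶜ \ F : Finset (Fin n)) → Fin q)) := by
          apply Nat.card_le_card_of_injective
            (fun x : ↥Sf => ((⟨zA x.1, hmem'' x.1 x.2⟩ : ↥Sf''),
              fun w : ↥(Afinᶜ \ F : Finset (Fin n)) => x.1 w.1))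
          rintro ⟨x, hx⟩ ⟨y, hy⟩ hab
          have h1 : zA x = zA y := congrArg Subtype.val (congrArg Prod.fst hab)
          have h2 := congrArg Prod.snd hab
          apply Subtype.ext
          funext w
          show x w = y w
          by_cases hwA : w ∈ A
          · have := congrFun h1 w
            simpa [hzA, if_pos hwA] using this
          · by_cases hwF : w ∈ F
            · rw [hx.2 w hwF, hy.2 w hwF]
            · have hwmem : w ∈ (Afinᶜ \ F : Finset (Fin n)) := by
                rw [Finset.mem_sdiff, Finset.mem_compl]
                exact ⟨fun h => hwA ((hAfinmem w).mp h), hwF⟩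
              exact congrFun h2 ⟨w, hwmem⟩
        have hcq : Nat.card (Fin q) = q := by simp
        rwa [Nat.card_prod, Nat.card_fun, Nat.card_eq_finsetCard, hcq] at hinj
      have hexp : (Afinᶜ \ F).card + F.card = F''.card := by
        rw [hF'', Finset.union_comm, ← Finset.card_sdiff_add_card Afinᶜ F]
      calc Nat.card Sf * q ^ (F.card + (trivSet f).ncard)
          ≤ (Nat.card Sf'' * q ^ (Afinᶜ \ F).card) * q ^ (F.card + (trivSet f).ncard) :=
            Nat.mul_le_mul_right _ hcard2
        _ = Nat.card Sf'' * q ^ ((Afinᶜ \ F).card + (F.card + (trivSet f).ncard)) := by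
            rw [mul_assoc, ← pow_add]
        _ ≤ Nat.card Sf'' * q ^ (F''.card + (trivSet f'').ncard) :=
            Nat.mul_le_mul_left _ (Nat.pow_le_pow_right (by omega) (by omega))
        _ ≤ q ^ n := hIH2

end P4

/-- for `q ≥ 2`, `f ∈ F[D,q]` and a complete schedule `σ`,
`|Per(f^σ)| ≤ q ^ (n - T(D))`. -/
theorem periodic_rank_complete_upper_bound {n q : ℕ} (hn : 1 ≤ n) (hq : 2 ≤ q)
    (D : Fin n → Fin n → Prop)
    (f : (Fin n → Fin q) → Fin n → Fin q) (hf : ExactIG D f)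
    (σ : List (Finset (Fin n))) (hσ : CompleteSchedule σ) :
    Nat.card (Function.periodicPts (applySchedule f σ)) ≤ q ^ (n - numTrivial D) := by
  classical
  set z0 : Fin q := ⟨0, by omega⟩
  have haux := aux_bound hq z0 ((∅ : Finset (Fin n))ᶜ).card ∅ f σ le_rfl (by simp) hσ
  have hset : {x : Fin n → Fin q |
      x ∈ Function.periodicPts (applySchedule f σ) ∧ ∀ w ∈ (∅ : Finset (Fin n)), x w = z0}
      = Function.periodicPts (applySchedule f σ) := by
    ext x; simp
  rw [hset, Finset.card_empty, Nat.zero_add] at haux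
  -- relate numTrivial D to (trivSet f).ncard
  have hDIG : ∀ u v : Fin n, IG f u v ↔ D u v := hf
  have hTsub : {v : Fin n | ¬ ∃ c : List (Fin n), IsCycleList D c ∧ v ∈ c} ⊆ trivSet f := by
    intro v hv htg
    apply hv
    have htgD : Relation.TransGen D v v := by
      refine Relation.TransGen.mono ?_ _ _ htg
      intro a b hab
      exact (hDIG a b).mp hab
    exact cycle_of_transGen htgD
  have hT : numTrivial D ≤ (trivSet f).ncard :=
    Set.ncard_le_ncard hTsub (Set.toFinite _)
  have hTn : numTrivial D ≤ n := by
    have h1 : numTrivial D ≤ (Set.univ : Set (Fin n)).ncard :=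
      Set.ncard_le_ncard (Set.subset_univ _) (Set.toFinite _)
    rwa [Set.ncard_univ, Nat.card_eq_fintype_card, Fintype.card_fin] at h1
  have hmain : Nat.card (Function.periodicPts (applySchedule f σ)) * q ^ numTrivial D
      ≤ q ^ n := by
    calc Nat.card (Function.periodicPts (applySchedule f σ)) * q ^ numTrivial D
        ≤ Nat.card (Function.periodicPts (applySchedule f σ)) * q ^ (trivSet f).ncard :=
          Nat.mul_le_mul_left _ (Nat.pow_le_pow_right (by omega) hT)
      _ ≤ q ^ n := haux
  have hsplit : q ^ n = q ^ (n - numTrivial D) * q ^ numTrivial D := by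
    rw [← pow_add, Nat.sub_add_cancel hTn]
  rw [hsplit] at hmain
  exact Nat.le_of_mul_le_mul_right hmain (pow_pos (by omega) _)
end

section
/- Let D be a digraph on vertex set V = {1,…,n} and let p ≥ n. Then α_p(D) = α_n(D) = max { Σ_{i=1}^r |C_i| }, where the maximum is taken over all families C_1,…,C_r of pairwise vertex-disjoint cycles of D and |C_i| denotes the number of vertices of C_i. -/
open Function

namespace St18
open Finset
open scoped Classical

variable {n : ℕ} {D : Fin n → Fin n → Prop}

def WSet (D : Fin n → Fin n → Prop) (p : ℕ) : Set ℕ :=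
  {k : ℕ | ∃ W : Fin k → Fin (p + 1) → Fin n,
    (∀ i, IsPWalk D p (W i)) ∧ ∀ i j : Fin k, i ≠ j → ∀ s, W i s ≠ W j s}

lemma alphaWalks_def (D : Fin n → Fin n → Prop) (p : ℕ) :
    alphaWalks D p = sSup (WSet D p) := rfl

lemma zero_mem_WSet {p : ℕ} : 0 ∈ WSet D p :=
  ⟨fun i => i.elim0, fun i => i.elim0, fun i => i.elim0⟩

lemma WSet_le {p k : ℕ} (hk : k ∈ WSet D p) : k ≤ n := by
  obtain ⟨W, _, hind⟩ := hk
  have hinj : Function.Injective (fun i : Fin k => W i 0) := by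
    intro i j h
    by_contra hne
    exact hind i j hne 0 h
  simpa using Fintype.card_le_of_injective _ hinj

lemma bddAbove_WSet {p : ℕ} : BddAbove (WSet D p) :=
  ⟨n, fun _ hk => WSet_le hk⟩

lemma modinj {l a b : ℕ} (ha : a < l) (hb : b < l) (h : (a + 1) % l = (b + 1) % l) : a = b := by
  rcases Nat.lt_or_ge (a + 1) l with h1 | h1
  · rw [Nat.mod_eq_of_lt h1] at h
    rcases Nat.lt_or_ge (b + 1) l with h2 | h2
    · rw [Nat.mod_eq_of_lt h2] at h; omega
    · have hb1 : b + 1 = l := by omega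
      rw [hb1, Nat.mod_self] at h; omega
  · have ha1 : a + 1 = l := by omega
    rw [ha1, Nat.mod_self] at h
    rcases Nat.lt_or_ge (b + 1) l with h2 | h2
    · rw [Nat.mod_eq_of_lt h2] at h; omega
    · omega

lemma _root_.List.next_get {α : Type*} [DecidableEq α] (l : List α) (h : l.Nodup)
    (i : Fin l.length) : List.next l (l.get i) (List.get_mem _ _) =
      l.get ⟨((i : ℕ) + 1) % l.length, Nat.mod_lt _ i.pos⟩ :=
  List.next_getElem l h i i.2

lemma next_congr {α : Type*} [DecidableEq α] {c c' : List α} {v : α} (e : c = c')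
    (h : v ∈ c) : List.next c v h = List.next c' v (e ▸ h) := by subst e; rfl

/-- Easy direction: a packing gives a family of independent p-walks. -/
lemma packing_mem_WSet (p : ℕ) {Cs : List (List (Fin n))}
    (h1 : ∀ c ∈ Cs, IsCycleList D c)
    (h2 : Cs.Pairwise (fun a b => ∀ v ∈ a, v ∉ b)) :
    (Cs.map List.length).sum ∈ WSet D p := by
  classical
  set S : List (Fin n) := Cs.flatten with hS
  have hSnd : S.Nodup := by
    refine List.nodup_flatten.mpr ⟨fun c hc => (h1 c hc).2.1, ?_⟩
    exact h2.imp (fun {a b} h => fun x hx => h x hx)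
  have hlen : S.length = (Cs.map List.length).sum := List.length_flatten
  have hsym : Symmetric (fun (a b : List (Fin n)) => ∀ v ∈ a, v ∉ b) := by
    intro a b hab x hxb hxa
    exact hab x hxa hxb
  have huniq : ∀ {v : Fin n} {c c' : List (Fin n)}, c ∈ Cs → c' ∈ Cs → v ∈ c → v ∈ c' →
      c = c' := by
    intro v c c' hc hc' hv hv'
    by_contra hne
    haveI : Std.Symm (fun (a b : List (Fin n)) => ∀ v ∈ a, v ∉ b) := ⟨fun a b h => hsym h⟩
    exact (h2.forall hc hc' hne) v hv hv'
  let f : Fin n → Fin n := fun v =>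
    if h : ∃ c ∈ Cs, v ∈ c then List.next h.choose v h.choose_spec.2 else v
  have hf_eq : ∀ {v : Fin n} {c : List (Fin n)} (hc : c ∈ Cs) (hv : v ∈ c),
      f v = List.next c v hv := by
    intro v c hc hv
    have hex : ∃ c ∈ Cs, v ∈ c := ⟨c, hc, hv⟩
    have he : hex.choose = c := huniq hex.choose_spec.1 hc hex.choose_spec.2 hv
    simp only [f, dif_pos hex]
    exact next_congr he _
  have hfS : ∀ {v : Fin n}, v ∈ S → f v ∈ S := by
    intro v hv
    obtain ⟨c, hc, hvc⟩ := List.mem_flatten.mp hv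
    rw [hf_eq hc hvc]
    exact List.mem_flatten.mpr ⟨c, hc, List.next_mem _ _ _⟩
  have hfD : ∀ {v : Fin n}, v ∈ S → D v (f v) := by
    intro v hv
    obtain ⟨c, hc, hvc⟩ := List.mem_flatten.mp hv
    rw [hf_eq hc hvc]
    obtain ⟨i, hi⟩ := List.get_of_mem hvc
    subst hi
    rw [List.next_get c (h1 c hc).2.1 i]
    exact (h1 c hc).2.2 i
  have hfmem : ∀ {v : Fin n} {c : List (Fin n)}, c ∈ Cs → v ∈ c → f v ∈ c := by
    intro v c hc hv
    rw [hf_eq hc hv]; exact List.next_mem _ _ _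
  have hinj : ∀ {v w : Fin n}, v ∈ S → w ∈ S → f v = f w → v = w := by
    intro v w hv hw hfvw
    obtain ⟨c, hc, hvc⟩ := List.mem_flatten.mp hv
    obtain ⟨c', hc', hwc⟩ := List.mem_flatten.mp hw
    have hcc : c = c' := by
      refine huniq hc hc' (hfmem hc hvc) ?_
      rw [hfvw]; exact hfmem hc' hwc
    subst hcc
    obtain ⟨i, hi⟩ := List.get_of_mem hvc
    obtain ⟨j, hj⟩ := List.get_of_mem hwc
    subst hi; subst hj
    rw [hf_eq hc (List.get_mem _ _), hf_eq hc (List.get_mem _ _)] at hfvw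
    rw [List.next_get c (h1 c hc).2.1 i, List.next_get c (h1 c hc).2.1 j] at hfvw
    have hgetinj := List.nodup_iff_injective_get.mp (h1 c hc).2.1
    have := hgetinj hfvw
    have hij : (i : ℕ) = (j : ℕ) := modinj i.2 j.2 (by simpa using congrArg Fin.val this)
    exact congrArg c.get (Fin.ext hij)
  have hiterS : ∀ (s : ℕ) {v : Fin n}, v ∈ S → f^[s] v ∈ S := by
    intro s
    induction s with
    | zero => intro v hv; simpa using hv
    | succ t ih =>
      intro v hv
      rw [Function.iterate_succ_apply']
      exact hfS (ih hv)
  rw [← hlen]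
  refine ⟨fun idx s => f^[(s : ℕ)] (S.get idx), ?_, ?_⟩
  · intro idx s
    simp only [Fin.coe_castSucc, Fin.val_succ]
    rw [Function.iterate_succ_apply']
    exact hfD (hiterS _ (List.get_mem _ _))
  · intro i j hne s
    have key : ∀ (m : ℕ), f^[m] (S.get i) ≠ f^[m] (S.get j) := by
      intro m
      induction m with
      | zero =>
        simp only [Function.iterate_zero_apply]
        intro h
        exact hne (List.nodup_iff_injective_get.mp hSnd h)
      | succ t ih =>
        rw [Function.iterate_succ_apply', Function.iterate_succ_apply']
        intro h
        exact ih (hinj (hiterS _ (List.get_mem _ _)) (hiterS _ (List.get_mem _ _)) h)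
    exact key (s : ℕ)

end St18

namespace St18
open Finset
open scoped Classical

variable {n : ℕ}

/-- Egerváry-type duality, proved via Hall's theorem. -/
lemma exists_cert (D : Fin n → Fin n → Prop) :
    ∃ (A B : Fin n → ℤ) (π : Equiv.Perm (Fin n)),
      (∀ u v, D u v → 1 ≤ A u + B v) ∧ (∀ v, 0 ≤ A v + B v) ∧
      (∀ v, π v = v ∨ D v (π v)) ∧
      (∑ v, (A v + B v)) ≤ #(univ.filter (fun v => D v (π v))) := by
  classical
  set P : ℤ → Prop := fun t => ∃ A B : Fin n → ℤ,
    (∀ u v, D u v → 1 ≤ A u + B v) ∧ (∀ v, 0 ≤ A v + B v) ∧ t = ∑ v, (A v + B v) with hP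
  have hbdd : ∃ b : ℤ, ∀ z : ℤ, P z → b ≤ z := by
    refine ⟨0, ?_⟩
    rintro z ⟨A, B, _, h2, rfl⟩
    exact Finset.sum_nonneg fun v _ => h2 v
  have hinh : ∃ z : ℤ, P z := by
    refine ⟨(n : ℤ), ?_⟩
    rw [hP]
    refine ⟨fun _ => 1, fun _ => 0, fun u v _ => by norm_num, fun v => by norm_num, ?_⟩
    simp
  obtain ⟨m, hmP, hmin⟩ := Int.exists_least_of_bdd hbdd hinh
  obtain ⟨A, B, hA, hAB, hm⟩ := hmP
  set T : Fin n → Finset (Fin n) := fun u =>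
    univ.filter (fun v => (D u v ∧ A u + B v ≤ 1) ∨ (u = v ∧ A u + B v ≤ 0)) with hT
  have hall : ∀ s : Finset (Fin n), #s ≤ #(s.biUnion T) := by
    by_contra hcon
    push_neg at hcon
    obtain ⟨s, hs⟩ := hcon
    set A' : Fin n → ℤ := fun v => A v - (if v ∈ s then 1 else 0) with hA'
    set B' : Fin n → ℤ := fun v => B v + (if v ∈ s.biUnion T then 1 else 0) with hB'
    have hfeas : P (∑ v, (A' v + B' v)) := by
      refine ⟨A', B', ?_, ?_, rfl⟩
      · intro u v hD
        by_cases hu : u ∈ s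
        · by_cases htight : A u + B v ≤ 1
          · have hvT : v ∈ s.biUnion T := by
              refine Finset.mem_biUnion.mpr ⟨u, hu, ?_⟩
              simp only [hT, mem_filter, mem_univ, true_and]
              tauto
            have h1 := hA u v hD
            simp only [hA', hB', if_pos hu, if_pos hvT]
            omega
          · have h1 : 2 ≤ A u + B v := by omega
            simp only [hA', hB', if_pos hu]
            have : (0:ℤ) ≤ (if v ∈ s.biUnion T then 1 else 0) := by positivity
            omega
        · have h1 := hA u v hD
          simp only [hA', hB', if_neg hu]
          have : (0:ℤ) ≤ (if v ∈ s.biUnion T then 1 else 0) := by positivity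
          omega
      · intro v
        by_cases hv : v ∈ s
        · by_cases htight : A v + B v ≤ 0
          · have hvT : v ∈ s.biUnion T := by
              refine Finset.mem_biUnion.mpr ⟨v, hv, ?_⟩
              simp only [hT, mem_filter, mem_univ, true_and]
              tauto
            have h1 := hAB v
            simp only [hA', hB', if_pos hv, if_pos hvT]
            omega
          · simp only [hA', hB', if_pos hv]
            have : (0:ℤ) ≤ (if v ∈ s.biUnion T then 1 else 0) := by positivity
            omega
        · have h1 := hAB v
          simp only [hA', hB', if_neg hv]
          have : (0:ℤ) ≤ (if v ∈ s.biUnion T then 1 else 0) := by positivity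
          omega
    have hval : (∑ v, (A' v + B' v)) = m - #s + #(s.biUnion T) := by
      have hcount : ∀ t : Finset (Fin n), (∑ v : Fin n, if v ∈ t then (1:ℤ) else 0) = #t := by
        intro t
        rw [Finset.sum_ite_mem]
        simp
      have e1 : (∑ v, (A' v + B' v)) =
          (∑ v, (A v + B v)) - (∑ v : Fin n, if v ∈ s then (1:ℤ) else 0)
            + (∑ v : Fin n, if v ∈ s.biUnion T then (1:ℤ) else 0) := by
        simp only [hA', hB']
        rw [← Finset.sum_sub_distrib, ← Finset.sum_add_distrib]
        exact Finset.sum_congr rfl fun v _ => by ring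
      rw [e1, ← hm, hcount, hcount]
    have := hmin _ hfeas
    rw [hval] at this
    have hcard : (#(s.biUnion T) : ℤ) < (#s : ℤ) := by exact_mod_cast hs
    omega
  obtain ⟨f, hfinj, hfT⟩ := (Finset.all_card_le_biUnion_card_iff_exists_injective T).mp hall
  let π : Equiv.Perm (Fin n) := Equiv.ofBijective f (Finite.injective_iff_bijective.mp hfinj)
  have hπ : ∀ v, π v = f v := fun v => rfl
  have hTf : ∀ v, (D v (f v) ∧ A v + B (f v) ≤ 1) ∨ (v = f v ∧ A v + B (f v) ≤ 0) := by
    intro v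
    have := hfT v
    simp only [hT, mem_filter, mem_univ, true_and] at this
    exact this
  refine ⟨A, B, π, hA, hAB, ?_, ?_⟩
  · intro v
    rcases hTf v with h | h
    · exact Or.inr (by rw [hπ]; exact h.1)
    · exact Or.inl (by rw [hπ]; exact h.1.symm)
  · have e2 : (∑ v, (A v + B v)) = ∑ v, (A v + B (π v)) := by
      rw [Finset.sum_add_distrib, Finset.sum_add_distrib]
      congr 1
      exact (Equiv.sum_comp π B).symm
    rw [e2]
    have e3 : ∀ v : Fin n, A v + B (π v) ≤ (if D v (π v) then (1:ℤ) else 0) := by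
      intro v
      rcases hTf v with h | h
      · rw [hπ, if_pos h.1]; exact h.2
      · have : (0:ℤ) ≤ (if D v (π v) then (1:ℤ) else 0) := by positivity
        have h2 : A v + B (π v) ≤ 0 := by rw [hπ]; exact h.2
        omega
    calc (∑ v, (A v + B (π v))) ≤ ∑ v : Fin n, (if D v (π v) then (1:ℤ) else 0) :=
          Finset.sum_le_sum fun v _ => e3 v
      _ = #(univ.filter (fun v => D v (π v))) := by rw [Finset.sum_boole]

end St18

namespace St18
open Finset Equiv.Perm
open scoped Classical

variable {n : ℕ} {D : Fin n → Fin n → Prop}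

/-- From a "good" permutation, extract a packing of disjoint cycles whose total
length is the weight of the permutation. -/
lemma perm_packing (hn : 0 < n) (π : Equiv.Perm (Fin n))
    (hg : ∀ v, π v = v ∨ D v (π v)) :
    ∃ Cs : List (List (Fin n)),
      (∀ c ∈ Cs, IsCycleList D c) ∧
      Cs.Pairwise (fun a b => ∀ v ∈ a, v ∉ b) ∧
      (Cs.map List.length).sum = #(univ.filter (fun v => D v (π v))) := by
  classical
  let xof : Equiv.Perm (Fin n) → Fin n := fun σ =>
    if h : σ.support.Nonempty then h.choose else ⟨0, hn⟩
  let cyc : Equiv.Perm (Fin n) → List (Fin n) := fun σ => σ.toList (xof σ)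
  have hx : ∀ {σ : Equiv.Perm (Fin n)}, σ ∈ π.cycleFactorsFinset → xof σ ∈ σ.support := by
    intro σ hσ
    have hc : σ.IsCycle := (mem_cycleFactorsFinset_iff.mp hσ).1
    have hne := hc.nonempty_support
    simp only [xof, dif_pos hne]
    exact hne.choose_spec
  have hcyclen : ∀ {σ : Equiv.Perm (Fin n)}, σ ∈ π.cycleFactorsFinset →
      (cyc σ).length = #σ.support := by
    intro σ hσ
    have hc : σ.IsCycle := (mem_cycleFactorsFinset_iff.mp hσ).1
    have hmem : σ (xof σ) ≠ xof σ := Equiv.Perm.mem_support.mp (hx hσ)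
    rw [show (cyc σ) = σ.toList (xof σ) from rfl, Equiv.Perm.length_toList,
      hc.cycleOf_eq hmem]
  have hcycmem : ∀ {σ : Equiv.Perm (Fin n)}, σ ∈ π.cycleFactorsFinset →
      ∀ {y : Fin n}, y ∈ cyc σ → y ∈ σ.support := by
    intro σ hσ y hy
    rw [show (cyc σ) = σ.toList (xof σ) from rfl, Equiv.Perm.mem_toList_iff] at hy
    exact (hy.1.mem_support_iff).mp hy.2
  have hcycCL : ∀ {σ : Equiv.Perm (Fin n)}, σ ∈ π.cycleFactorsFinset →
      IsCycleList D (cyc σ) := by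
    intro σ hσ
    have hc : σ.IsCycle := (mem_cycleFactorsFinset_iff.mp hσ).1
    refine ⟨?_, Equiv.Perm.nodup_toList σ (xof σ), ?_⟩
    · have : 0 < (cyc σ).length := by
        rw [hcyclen hσ]
        have := hc.two_le_card_support
        omega
      exact List.ne_nil_of_length_pos this
    · intro i
      have hget : (cyc σ).get i ∈ cyc σ := List.get_mem _ _
      have hnext : (cyc σ).get ⟨((i : ℕ) + 1) % (cyc σ).length, Nat.mod_lt _ i.pos⟩
          = σ ((cyc σ).get i) := by
        rw [← List.next_get _ (Equiv.Perm.nodup_toList σ (xof σ)) i]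
        exact Equiv.Perm.next_toList_eq_apply σ (xof σ) _ hget
      rw [hnext]
      have hys : (cyc σ).get i ∈ σ.support := hcycmem hσ hget
      have hσπ : σ ((cyc σ).get i) = π ((cyc σ).get i) :=
        (mem_cycleFactorsFinset_iff.mp hσ).2 _ hys
      rw [hσπ]
      rcases hg ((cyc σ).get i) with hfix | harc
      · exfalso
        have := Equiv.Perm.mem_support.mp hys
        rw [hσπ] at this
        exact this hfix
      · exact harc
  let cycsL : List (List (Fin n)) := π.cycleFactorsFinset.toList.map cyc
  let loopF : Finset (Fin n) := univ.filter (fun v => π v = v ∧ D v v)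
  let loopsL : List (List (Fin n)) := loopF.toList.map (fun v => [v])
  refine ⟨loopsL ++ cycsL, ?_, ?_, ?_⟩
  · intro c hc
    rcases List.mem_append.mp hc with hc | hc
    · obtain ⟨v, hv, rfl⟩ := List.mem_map.mp hc
      have hv' : π v = v ∧ D v v := by
        have := Finset.mem_toList.mp hv
        simpa [loopF] using this
      refine ⟨by simp, by simp, ?_⟩
      intro i
      have hget : ∀ (j : Fin ([v].length)), [v].get j = v := by
        intro j; fin_cases j; rfl
      rw [hget, hget]
      exact hv'.2
    · obtain ⟨σ, hσ, rfl⟩ := List.mem_map.mp hc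
      exact hcycCL (Finset.mem_toList.mp hσ)
  · rw [List.pairwise_append]
    refine ⟨?_, ?_, ?_⟩
    · rw [List.pairwise_map]
      have hnd : loopF.toList.Nodup := Finset.nodup_toList _
      refine hnd.imp ?_
      intro v w hvw
      intro z hz hz'
      simp only [List.mem_singleton] at hz hz'
      exact hvw (hz ▸ hz'.symm ▸ rfl)
    · rw [List.pairwise_map]
      have hnd : π.cycleFactorsFinset.toList.Nodup := Finset.nodup_toList _
      have hpw := π.cycleFactorsFinset_pairwise_disjoint
      refine List.Pairwise.imp_of_mem ?_ hnd
      intro σ τ hσL hτL hne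
      have hσF := Finset.mem_toList.mp hσL
      have hτF := Finset.mem_toList.mp hτL
      have hdisj : _root_.Disjoint σ.support τ.support :=
        (hpw hσF hτF hne).disjoint_support
      intro v hv hv'
      have h1 := hcycmem hσF hv
      have h2 := hcycmem hτF hv'
      exact Finset.disjoint_left.mp hdisj h1 h2
    · intro a ha b hb
      obtain ⟨v, hv, rfl⟩ := List.mem_map.mp ha
      obtain ⟨σ, hσ, rfl⟩ := List.mem_map.mp hb
      have hσF := Finset.mem_toList.mp hσ
      have hv' : π v = v := by
        have := Finset.mem_toList.mp hv
        simp only [loopF, mem_filter] at this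
        exact this.2.1
      intro z hz hz'
      simp only [List.mem_singleton] at hz
      subst hz
      have h1 : z ∈ σ.support := hcycmem hσF hz'
      have h2 : z ∈ π.support := mem_cycleFactorsFinset_support_le hσF h1
      exact (Equiv.Perm.mem_support.mp h2) hv'
  · rw [List.map_append, List.sum_append]
    have hone : ∀ (l : List (Fin n)), ((l.map (fun v => [v])).map List.length).sum = l.length := by
      intro l
      rw [List.map_map]
      have hc : (List.length ∘ fun v : Fin n => [v]) = fun _ => 1 := by funext v; rfl
      rw [hc]
      induction l with
      | nil => rfl
      | cons a t ih =>
        simp only [List.map_cons, List.sum_cons, List.length_cons, ih]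
        omega
    have hloop : ((loopsL).map List.length).sum = #loopF := by
      rw [show loopsL = loopF.toList.map (fun v => [v]) from rfl, hone]
      exact Finset.length_toList _
    have hcycs : ((cycsL).map List.length).sum = #π.support := by
      rw [show cycsL = π.cycleFactorsFinset.toList.map cyc from rfl, List.map_map]
      have hcongr : π.cycleFactorsFinset.toList.map (List.length ∘ cyc)
          = π.cycleFactorsFinset.toList.map (fun σ => #σ.support) := by
        apply List.map_congr_left
        intro σ hσ
        exact hcyclen (Finset.mem_toList.mp hσ)
      rw [hcongr]
      rw [Finset.sum_map_toList]
      have := π.sum_cycleType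
      rw [Equiv.Perm.cycleType_def] at this
      rw [← this]
      rfl
    rw [hloop, hcycs]
    have hdisj : _root_.Disjoint loopF π.support := by
      rw [Finset.disjoint_left]
      intro v hv hvs
      simp only [loopF, mem_filter] at hv
      exact (Equiv.Perm.mem_support.mp hvs) hv.2.1
    have hunion : loopF ∪ π.support = univ.filter (fun v => D v (π v)) := by
      ext v
      simp only [Finset.mem_union, loopF, mem_filter, mem_univ, true_and, Equiv.Perm.mem_support]
      constructor
      · rintro (⟨h1, h2⟩ | h1)
        · rw [h1]; exact h2
        · rcases hg v with h | h
          · exact absurd h h1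
          · exact h
      · intro hD
        by_cases hfix : π v = v
        · exact Or.inl ⟨hfix, by rw [hfix] at hD; exact hD⟩
        · exact Or.inr hfix
    rw [← hunion, Finset.card_union_of_disjoint hdisj]

end St18

namespace St18
open Finset
open scoped Classical

variable {n : ℕ} {D : Fin n → Fin n → Prop}

/-- weight of a walk prefix -/
def wt (A B : Fin n → ℤ) (g : ℕ → Fin n) (m : ℕ) : ℤ :=
  ∑ s ∈ Finset.range m, (A (g s) + B (g s) - 1)

def IsWalkFn (D : Fin n → Fin n → Prop) (g : ℕ → Fin n) (m : ℕ) : Prop :=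
  ∀ s < m, D (g s) (g (s + 1))

lemma wt_ge {A B : Fin n → ℤ} (hAB : ∀ v, 0 ≤ A v + B v) (g : ℕ → Fin n) (m : ℕ) :
    -(m : ℤ) ≤ wt A B g m := by
  have : ∑ s ∈ Finset.range m, (-1 : ℤ) ≤ wt A B g m := by
    apply Finset.sum_le_sum
    intro s _
    have := hAB (g s)
    omega
  simpa using this

lemma covering {A B : Fin n → ℤ} (hA : ∀ u v, D u v → 1 ≤ A u + B v)
    {cl : List (Fin n)} (hcl : IsCycleList D cl) :
    (cl.length : ℤ) ≤ ∑ i : Fin cl.length, (A (cl.get i) + B (cl.get i)) := by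
  obtain ⟨hne, hnd, harc⟩ := hcl
  have hpos : 0 < cl.length := List.length_pos_iff.mpr hne
  let rot : Fin cl.length → Fin cl.length := fun i => ⟨((i:ℕ)+1) % cl.length, Nat.mod_lt _ i.pos⟩
  have hrotinj : Function.Injective rot := by
    intro i j hij
    apply Fin.ext
    exact modinj i.2 j.2 (congrArg Fin.val hij)
  have hrotbij : Function.Bijective rot := Finite.injective_iff_bijective.mp hrotinj
  have hsum : ∑ i : Fin cl.length, B (cl.get (rot i)) = ∑ i : Fin cl.length, B (cl.get i) :=
    Fintype.sum_bijective rot hrotbij _ _ (fun i => rfl)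
  have hterm : ∀ i : Fin cl.length, (1:ℤ) ≤ A (cl.get i) + B (cl.get (rot i)) :=
    fun i => hA _ _ (harc i)
  calc (cl.length : ℤ) = ∑ _i : Fin cl.length, (1:ℤ) := by simp
    _ ≤ ∑ i : Fin cl.length, (A (cl.get i) + B (cl.get (rot i))) :=
        Finset.sum_le_sum fun i _ => hterm i
    _ = (∑ i : Fin cl.length, A (cl.get i)) + ∑ i : Fin cl.length, B (cl.get (rot i)) :=
        Finset.sum_add_distrib
    _ = ∑ i : Fin cl.length, (A (cl.get i) + B (cl.get i)) := by
        rw [hsum, ← Finset.sum_add_distrib]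

lemma splice {A B : Fin n → ℤ} (hn : 0 < n)
    (hA : ∀ u v, D u v → 1 ≤ A u + B v) (hAB : ∀ v, 0 ≤ A v + B v) :
    ∀ (m : ℕ) (g : ℕ → Fin n) (u : Fin n), IsWalkFn D g m → g m = u →
      ∃ m' < n, ∃ g' : ℕ → Fin n, IsWalkFn D g' m' ∧ g' m' = u ∧ wt A B g' m' ≤ wt A B g m := by
  intro m
  induction m using Nat.strong_induction_on with
  | _ m IH =>
  intro g u hw hend
  by_cases hmn : m < n
  · exact ⟨m, hmn, g, hw, hend, le_refl _⟩
  push_neg at hmn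
  obtain ⟨x, y, hxy, hgxy⟩ := Fintype.exists_ne_map_eq_of_card_lt
      (fun t : Fin (n+1) => g t) (by simp)
  obtain ⟨a, b, hab, hbn, hgab⟩ : ∃ a b : ℕ, a < b ∧ b ≤ n ∧ g a = g b := by
    rcases Nat.lt_or_ge (x : ℕ) (y : ℕ) with h | h
    · exact ⟨x, y, h, by omega, hgxy⟩
    · have hne : (y : ℕ) ≠ (x : ℕ) := fun hc => hxy (Fin.ext hc.symm)
      exact ⟨y, x, by omega, by omega, hgxy.symm⟩
  have hQ : ∃ j : ℕ, ∃ i, i < j ∧ g i = g j := ⟨b, a, hab, hgab⟩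
  obtain ⟨i0, hi0J, hgi0⟩ := Nat.find_spec hQ
  set J := Nat.find hQ with hJdef
  have hJmin : ∀ j' < J, ¬ ∃ i, i < j' ∧ g i = g j' := fun j' h => Nat.find_min hQ h
  have hJb : J ≤ b := Nat.find_min' hQ ⟨a, hab, hgab⟩
  set L := J - i0 with hL
  have hL1 : 1 ≤ L := by omega
  have hJm : J ≤ m := by omega
  have hinjJ : ∀ p q, p < q → q < J → g p ≠ g q := by
    intro p q hpq hqJ hgpq
    exact hJmin q hqJ ⟨p, hpq, hgpq⟩
  set cl : List (Fin n) := (List.range L).map (fun t => g (i0 + t)) with hcl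
  have hclen : cl.length = L := by simp [hcl]
  have hclget : ∀ (i : Fin cl.length), cl.get i = g (i0 + (i:ℕ)) := by
    intro i
    simp [hcl]
  have hclCL : IsCycleList D cl := by
    refine ⟨?_, ?_, ?_⟩
    · apply List.ne_nil_of_length_pos; omega
    · rw [hcl]
      refine List.Nodup.map_on ?_ List.nodup_range
      intro t ht t' ht' hgt
      simp only [List.mem_range] at ht ht'
      by_contra hne
      rcases Nat.lt_or_ge t t' with h | h
      · exact hinjJ (i0+t) (i0+t') (by omega) (by omega) hgt
      · exact hinjJ (i0+t') (i0+t) (by omega) (by omega) hgt.symm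
    · intro i
      have h2 : cl.get ⟨((i:ℕ)+1) % cl.length, Nat.mod_lt _ i.pos⟩
          = g (i0 + (((i:ℕ)+1) % cl.length)) := hclget _
      rw [hclget i, h2]
      by_cases hlast : (i:ℕ) + 1 < cl.length
      · rw [Nat.mod_eq_of_lt hlast]
        have harc := hw (i0 + i) (by have := i.2; omega)
        have he : i0 + ((i:ℕ)+1) = (i0 + i) + 1 := by omega
        rw [he]
        exact harc
      · have hieq : (i:ℕ) + 1 = cl.length := by have := i.2; omega
        rw [hieq, Nat.mod_self]
        have he0 : i0 + 0 = i0 := rfl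
        rw [he0, hgi0]
        have hieq2 : (i:ℕ) + 1 = L := by omega
        have hJe : J = (i0 + i) + 1 := by omega
        rw [hJe]
        exact hw (i0+i) (by omega)
  have hcov := covering hA hclCL
  have hcov2 : (L:ℤ) ≤ ∑ t ∈ Finset.range L, (A (g (i0+t)) + B (g (i0+t))) := by
    calc (L:ℤ) = (cl.length : ℤ) := by rw [hclen]
      _ ≤ ∑ i : Fin cl.length, (A (cl.get i) + B (cl.get i)) := hcov
      _ = ∑ i : Fin cl.length, (A (g (i0+(i:ℕ))) + B (g (i0+(i:ℕ)))) :=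
          Finset.sum_congr rfl fun i _ => by rw [hclget]
      _ = ∑ t ∈ Finset.range cl.length, (A (g (i0+t)) + B (g (i0+t))) :=
          Fin.sum_univ_eq_sum_range (fun t => A (g (i0+t)) + B (g (i0+t))) cl.length
      _ = ∑ t ∈ Finset.range L, (A (g (i0+t)) + B (g (i0+t))) := by rw [hclen]
  have hcov3 : (L:ℤ) ≤ ∑ s ∈ Finset.Ico i0 J, (A (g s) + B (g s)) := by
    rw [Finset.sum_Ico_eq_sum_range]
    have : J - i0 = L := rfl
    rw [this]
    exact hcov2
  set g' : ℕ → Fin n := fun s => if s < i0 then g s else g (s + L) with hg'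
  set m' := m - L with hm'
  have hi0m' : i0 ≤ m' := by omega
  have hw' : IsWalkFn D g' m' := by
    intro s hs
    by_cases h1 : s + 1 < i0
    · simp only [hg']
      rw [if_pos (by omega), if_pos h1]
      exact hw s (by omega)
    · by_cases h2 : s < i0
      · have hsi : s + 1 = i0 := by omega
        simp only [hg']
        rw [if_pos h2, if_neg (by omega)]
        have he : s + 1 + L = J := by omega
        rw [he, ← hgi0, ← hsi]
        exact hw s (by omega)
      · simp only [hg']
        rw [if_neg h2, if_neg (by omega)]
        have he : s + 1 + L = s + L + 1 := by omega
        rw [he]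
        exact hw (s + L) (by omega)
  have hend' : g' m' = u := by
    simp only [hg']
    rw [if_neg (by omega)]
    have he : m' + L = m := by omega
    rw [he, hend]
  set F : ℕ → ℤ := fun s => A (g s) + B (g s) - 1 with hF
  have hwt_g : wt A B g m = (∑ s ∈ Finset.Ico 0 i0, F s) + (∑ s ∈ Finset.Ico i0 J, F s)
      + (∑ s ∈ Finset.Ico J m, F s) := by
    rw [wt, Finset.range_eq_Ico]
    rw [← Finset.sum_Ico_consecutive F (Nat.zero_le i0) (by omega : i0 ≤ m)]
    rw [← Finset.sum_Ico_consecutive F (by omega : i0 ≤ J) (by omega : J ≤ m)]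
    ring
  have hwt_g' : wt A B g' m' = (∑ s ∈ Finset.Ico 0 i0, F s) + (∑ s ∈ Finset.Ico J m, F s) := by
    rw [wt, Finset.range_eq_Ico]
    rw [← Finset.sum_Ico_consecutive _ (Nat.zero_le i0) hi0m']
    congr 1
    · apply Finset.sum_congr rfl
      intro s hs
      have hsi : s < i0 := (Finset.mem_Ico.mp hs).2
      simp only [hg', hF]
      rw [if_pos hsi]
    · rw [Finset.sum_Ico_eq_sum_range, Finset.sum_Ico_eq_sum_range]
      have hcard : m' - i0 = m - J := by omega
      rw [hcard]
      apply Finset.sum_congr rfl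
      intro t _
      simp only [hg', hF]
      rw [if_neg (by omega)]
      have he : i0 + t + L = J + t := by omega
      rw [he]
  have hsum_nonneg : 0 ≤ ∑ s ∈ Finset.Ico i0 J, F s := by
    have hcard : (Finset.Ico i0 J).card = L := by rw [Nat.card_Ico]
    have : ∑ s ∈ Finset.Ico i0 J, F s
        = (∑ s ∈ Finset.Ico i0 J, (A (g s) + B (g s))) - (L:ℤ) := by
      rw [hF]
      rw [Finset.sum_sub_distrib]
      congr 1
      rw [Finset.sum_const, hcard]
      simp
    omega
  have hwt : wt A B g' m' ≤ wt A B g m := by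
    rw [hwt_g, hwt_g']
    omega
  obtain ⟨m'', hm'', g'', h1, h2, h3⟩ := IH m' (by omega) g' u hw' hend'
  exact ⟨m'', hm'', g'', h1, h2, le_trans h3 hwt⟩

end St18

namespace St18
open Finset
open scoped Classical

variable {n : ℕ} {D : Fin n → Fin n → Prop}

noncomputable def dset (D : Fin n → Fin n → Prop) (A B : Fin n → ℤ) (u : Fin n) : Finset ℤ :=
  (Finset.Icc (-(n:ℤ)) 0).filter (fun t => ∃ m < n, ∃ g : ℕ → Fin n,
      IsWalkFn D g m ∧ g m = u ∧ t = wt A B g m)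

lemma mem_dset {A B : Fin n → ℤ} {u : Fin n} {t : ℤ} :
    t ∈ dset D A B u ↔ ((-(n:ℤ) ≤ t ∧ t ≤ 0) ∧ ∃ m < n, ∃ g : ℕ → Fin n,
      IsWalkFn D g m ∧ g m = u ∧ t = wt A B g m) := by
  rw [dset, Finset.mem_filter, Finset.mem_Icc]

lemma dset_nonempty (hn : 0 < n) (A B : Fin n → ℤ) (u : Fin n) :
    (dset D A B u).Nonempty := by
  refine ⟨0, ?_⟩
  rw [mem_dset]
  refine ⟨⟨by omega, le_refl 0⟩, 0, hn, fun _ => u, fun s hs => absurd hs (by omega), rfl, ?_⟩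
  simp [wt]

noncomputable def dfun (hn : 0 < n) (D : Fin n → Fin n → Prop) (A B : Fin n → ℤ)
    (u : Fin n) : ℤ :=
  (dset D A B u).min' (dset_nonempty hn A B u)

lemma dfun_le_zero (hn : 0 < n) (A B : Fin n → ℤ) (u : Fin n) :
    dfun hn D A B u ≤ 0 := by
  apply Finset.min'_le
  rw [mem_dset]
  exact ⟨⟨by omega, le_refl 0⟩, 0, hn, fun _ => u, fun s hs => absurd hs (by omega), rfl,
    by simp [wt]⟩

lemma dfun_ge (hn : 0 < n) {A B : Fin n → ℤ} (hAB : ∀ v, 0 ≤ A v + B v) (u : Fin n) :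
    -((n:ℤ) - 1) ≤ dfun hn D A B u := by
  have hmem : dfun hn D A B u ∈ dset D A B u := Finset.min'_mem _ _
  rw [mem_dset] at hmem
  obtain ⟨_, m, hm, g, hwg, hge, hwt⟩ := hmem
  have h1 := wt_ge hAB g m
  have h2 : -((m:ℤ)) ≤ dfun hn D A B u := by rw [hwt]; exact h1
  have h3 : (m:ℤ) < (n:ℤ) := by exact_mod_cast hm
  omega

lemma dfun_key (hn : 0 < n) {A B : Fin n → ℤ}
    (hA : ∀ u v, D u v → 1 ≤ A u + B v) (hAB : ∀ v, 0 ≤ A v + B v)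
    {u v : Fin n} (hD : D u v) :
    dfun hn D A B v ≤ dfun hn D A B u + (A u + B u) - 1 := by
  by_cases hRHS : 0 ≤ dfun hn D A B u + (A u + B u) - 1
  · exact le_trans (dfun_le_zero hn A B v) hRHS
  · push_neg at hRHS
    have hmem : dfun hn D A B u ∈ dset D A B u := Finset.min'_mem _ _
    rw [mem_dset] at hmem
    obtain ⟨_, m, hm, g, hwg, hge, hwt⟩ := hmem
    set gE : ℕ → Fin n := fun s => if s ≤ m then g s else v with hgE
    have hwE : IsWalkFn D gE (m + 1) := by
      intro s hs
      by_cases h1 : s < m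
      · simp only [hgE]
        rw [if_pos (by omega), if_pos (by omega)]
        exact hwg s h1
      · have hsm : s = m := by omega
        subst hsm
        simp only [hgE]
        rw [if_pos (le_refl _), if_neg (by omega), hge]
        exact hD
    have hendE : gE (m + 1) = v := by
      simp only [hgE]
      rw [if_neg (by omega)]
    have hwtE : wt A B gE (m + 1) = dfun hn D A B u + (A u + B u) - 1 := by
      rw [wt, Finset.sum_range_succ]
      have e1 : ∑ s ∈ Finset.range m, (A (gE s) + B (gE s) - 1)
          = ∑ s ∈ Finset.range m, (A (g s) + B (g s) - 1) := by
        apply Finset.sum_congr rfl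
        intro s hs
        have : s ≤ m := by have := Finset.mem_range.mp hs; omega
        simp only [hgE]
        rw [if_pos this]
      have e2 : gE m = u := by
        simp only [hgE]
        rw [if_pos (le_refl _)]
        exact hge
      rw [e1, e2, ← wt, ← hwt]
      ring
    obtain ⟨m'', hm'', g'', h1, h2, h3⟩ := splice hn hA hAB (m+1) gE v hwE hendE
    rw [hwtE] at h3
    have hmem'' : wt A B g'' m'' ∈ dset D A B v := by
      rw [mem_dset]
      refine ⟨⟨?_, by omega⟩, m'', hm'', g'', h1, h2, rfl⟩
      have := wt_ge hAB g'' m''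
      have h4 : (m'' : ℤ) ≤ n := by exact_mod_cast le_of_lt hm''
      omega
    exact le_trans (Finset.min'_le _ _ hmem'') h3

/-- The cut argument: any independent family of `p`-walks, `p ≥ n`, has size at most `∑ (A+B)`. -/
lemma WSet_le_sum (hn : 0 < n) {p : ℕ} (hp : n ≤ p)
    {A B : Fin n → ℤ}
    (hA : ∀ u v, D u v → 1 ≤ A u + B v) (hAB : ∀ v, 0 ≤ A v + B v)
    {k : ℕ} (hk : k ∈ WSet D p) :
    (k : ℤ) ≤ ∑ v, (A v + B v) := by
  classical
  obtain ⟨W, hWwalk, hWind⟩ := hk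
  set y : Fin n → ℤ := fun u => dfun hn D A B u + ((n:ℤ) - 1) with hy
  have hy0 : ∀ u, 0 ≤ y u := by
    intro u
    have := dfun_ge (D := D) hn hAB u
    simp only [hy]
    omega
  have hy1 : ∀ u, y u ≤ (n:ℤ) - 1 := by
    intro u
    have := dfun_le_zero (D := D) hn A B u
    simp only [hy]
    omega
  have hyarc : ∀ u v, D u v → y v ≤ y u + (A u + B u) - 1 := by
    intro u v hD
    have := dfun_key hn hA hAB hD
    simp only [hy]
    omega
  set G : Fin k → ℕ → Fin n := fun i s =>
    W i ⟨min s p, lt_of_le_of_lt (Nat.min_le_right s p) (Nat.lt_succ_self p)⟩ with hG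
  have hGp : ∀ (i : Fin k) (s : ℕ) (hs : s ≤ p), G i s = W i ⟨s, by omega⟩ := by
    intro i s hs
    simp only [hG]
    congr 1
    exact Fin.ext (by simp [Nat.min_eq_left hs])
  have hGarc : ∀ (i : Fin k) (s : ℕ), s < p → D (G i s) (G i (s+1)) := by
    intro i s hs
    rw [hGp i s (by omega), hGp i (s+1) (by omega)]
    have := hWwalk i ⟨s, hs⟩
    have e1 : (⟨s, hs⟩ : Fin p).castSucc = ⟨s, by omega⟩ := rfl
    have e2 : (⟨s, hs⟩ : Fin p).succ = ⟨s+1, by omega⟩ := rfl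
    rw [e1, e2] at this
    exact this
  have hcross : ∀ i : Fin k, ∃ s : ℕ, s < n ∧
      y (G i s) + (s:ℤ) ≤ (n:ℤ) - 1 ∧ (n:ℤ) ≤ y (G i s) + (A (G i s) + B (G i s)) + (s:ℤ) := by
    intro i
    have hEex : ∃ t : ℕ, (n:ℤ) ≤ y (G i t) + (t:ℤ) := by
      refine ⟨n, ?_⟩
      have := hy0 (G i n)
      omega
    set T := Nat.find hEex with hT
    have hTspec : (n:ℤ) ≤ y (G i T) + (T:ℤ) := Nat.find_spec hEex
    have hTle : T ≤ n := Nat.find_min' hEex (by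
      have := hy0 (G i n)
      omega)
    have hT0 : T ≠ 0 := by
      intro h0
      rw [h0] at hTspec
      have := hy1 (G i 0)
      simp at hTspec
      omega
    set s := T - 1 with hs
    have hsT : s + 1 = T := by omega
    have hsn : s < n := by omega
    have hmin : ¬ ((n:ℤ) ≤ y (G i s) + (s:ℤ)) := Nat.find_min hEex (by omega)
    push_neg at hmin
    refine ⟨s, hsn, by omega, ?_⟩
    have harc : D (G i s) (G i (s+1)) := hGarc i s (by omega)
    have := hyarc _ _ harc
    rw [hsT] at *
    omega
  choose sf hsf1 hsf2 hsf3 using hcross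
  set Cut : Finset (Fin n × Fin n) := univ.filter (fun q =>
    y q.1 + ((q.2 : ℕ) : ℤ) ≤ (n:ℤ) - 1 ∧ (n:ℤ) ≤ y q.1 + (A q.1 + B q.1) + ((q.2 : ℕ) : ℤ))
    with hCut
  have hkCut : k ≤ Cut.card := by
    have := Finset.card_le_card_of_injOn
      (f := fun i : Fin k => ((G i (sf i), ⟨sf i, hsf1 i⟩) : Fin n × Fin n))
      (s := (univ : Finset (Fin k))) (t := Cut) ?_ ?_
    · simpa using this
    · intro i _
      rw [hCut, Finset.mem_coe, Finset.mem_filter]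
      exact ⟨Finset.mem_univ _, hsf2 i, hsf3 i⟩
    · intro i _ j _ hij
      simp only [Prod.mk.injEq] at hij
      have hs_eq : sf i = sf j := by
        have := congrArg Fin.val hij.2
        simpa using this
      by_contra hne
      have e1 := hGp i (sf i) (by have := hsf1 i; omega)
      have e2 := hGp j (sf i) (by have := hsf1 i; omega)
      have e3 : G j (sf j) = G j (sf i) := by rw [hs_eq]
      refine hWind i j hne ⟨sf i, by have := hsf1 i; omega⟩ ?_
      rw [← e1, ← e2, ← e3, hij.1]
  have hCutle : (Cut.card : ℤ) ≤ ∑ v, (A v + B v) := by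
    have hfib := Finset.card_eq_sum_card_fiberwise
      (f := fun q : Fin n × Fin n => q.1) (s := Cut) (t := univ) (fun x _ => Finset.mem_univ _)
    have hfibbd : ∀ u : Fin n,
        (Cut.filter (fun q => q.1 = u)).card ≤ (A u + B u).toNat := by
      intro u
      have hinj : Set.InjOn (fun q : Fin n × Fin n => ((q.2 : ℕ) : ℤ))
          (Cut.filter (fun q => q.1 = u)) := by
        intro q1 h1 q2 h2 he
        simp only [Finset.coe_filter, Set.mem_setOf_eq] at h1 h2
        simp only at he
        have hv : (q1.2 : ℕ) = (q2.2 : ℕ) := by exact_mod_cast he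
        exact Prod.ext (h1.2.trans h2.2.symm) (Fin.ext hv)
      have hmap : ∀ q ∈ Cut.filter (fun q => q.1 = u),
          ((q.2 : ℕ) : ℤ) ∈ Finset.Icc ((n:ℤ) - y u - (A u + B u)) ((n:ℤ) - 1 - y u) := by
        intro q hq
        rw [Finset.mem_filter] at hq
        obtain ⟨hqC, hq1⟩ := hq
        rw [hCut, Finset.mem_filter] at hqC
        obtain ⟨_, hc1, hc2⟩ := hqC
        rw [hq1] at hc1 hc2
        rw [Finset.mem_Icc]
        omega
      have hcard := Finset.card_le_card_of_injOn _ hmap hinj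
      calc (Cut.filter (fun q => q.1 = u)).card
          ≤ (Finset.Icc ((n:ℤ) - y u - (A u + B u)) ((n:ℤ) - 1 - y u)).card := hcard
        _ = ((n:ℤ) - 1 - y u + 1 - ((n:ℤ) - y u - (A u + B u))).toNat := Int.card_Icc _ _
        _ = (A u + B u).toNat := by
            congr 1
            ring
    calc (Cut.card : ℤ) = ∑ u : Fin n, ((Cut.filter (fun q => q.1 = u)).card : ℤ) := by
          exact_mod_cast congrArg Nat.cast hfib
      _ ≤ ∑ u : Fin n, ((A u + B u).toNat : ℤ) := by
          apply Finset.sum_le_sum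
          intro u _
          exact_mod_cast hfibbd u
      _ = ∑ u, (A u + B u) := by
          apply Finset.sum_congr rfl
          intro u _
          exact Int.toNat_of_nonneg (hAB u)
  have : (k : ℤ) ≤ (Cut.card : ℤ) := by exact_mod_cast hkCut
  omega

end St18

/-- for `p ≥ n`, `α_p(D) = α_n(D)` and both equal the maximum of `Σ |C_i|`
over all families of pairwise vertex-disjoint cycles of `D`. -/
theorem alpha_stabilises {n p : ℕ} (hn : 1 ≤ n) (hp : n ≤ p) (D : Fin n → Fin n → Prop) :
    alphaWalks D p = alphaWalks D n ∧
    IsGreatest {m : ℕ | ∃ Cs : List (List (Fin n)),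
        (∀ c ∈ Cs, IsCycleList D c) ∧
        Cs.Pairwise (fun a b => ∀ v ∈ a, v ∉ b) ∧
        m = (Cs.map List.length).sum}
      (alphaWalks D p) := by
  classical
  obtain ⟨A, B, π, hA, hAB, hgood, hval⟩ := St18.exists_cert D
  obtain ⟨Cs, hCs1, hCs2, hCs3⟩ := St18.perm_packing hn π hgood
  set ν := (Cs.map List.length).sum with hν
  have hwalkle : ∀ p', n ≤ p' → ∀ k ∈ St18.WSet D p', k ≤ ν := by
    intro p' hp' k hk
    have h1 : (k : ℤ) ≤ ∑ v, (A v + B v) := St18.WSet_le_sum hn hp' hA hAB hk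
    have h3 : ((Finset.univ.filter (fun v => D v (π v))).card : ℤ) = (ν : ℤ) := by
      exact_mod_cast hCs3.symm
    have h4 : (k : ℤ) ≤ (ν : ℤ) := by
      calc (k : ℤ) ≤ ∑ v, (A v + B v) := h1
        _ ≤ ((Finset.univ.filter (fun v => D v (π v))).card : ℤ) := hval
        _ = (ν : ℤ) := h3
    exact_mod_cast h4
  have halpha : ∀ p', n ≤ p' → alphaWalks D p' = ν := by
    intro p' hp'
    rw [St18.alphaWalks_def]
    apply le_antisymm
    · exact csSup_le ⟨0, St18.zero_mem_WSet⟩ (hwalkle p' hp')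
    · exact le_csSup St18.bddAbove_WSet (St18.packing_mem_WSet p' hCs1 hCs2)
  refine ⟨by rw [halpha p hp, halpha n le_rfl], ?_, ?_⟩
  · rw [halpha p hp]
    exact ⟨Cs, hCs1, hCs2, rfl⟩
  · rintro m ⟨Cs', h1, h2, rfl⟩
    rw [St18.alphaWalks_def]
    exact le_csSup St18.bddAbove_WSet (St18.packing_mem_WSet p h1 h2)
end
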